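/- Fix n > 0. For r ≥ 0 let W(r) be the 4×4 real symmetric matrix [[cosh r · I₂, −sinh r · Z],[−sinh r · Z, (2n + cosh r) · I₂]], with Z = diag(1,−1). Then the lowest PT symplectic eigenvalue ν(W(r)) tends to n as r → ∞. -/

import Mathlib

open Matrix
open scoped ComplexOrder

noncomputable section

/-- The 2×2 symplectic form `J = [[0,1],[-1,0]]`. -/
def J2 : Matrix (Fin 2) (Fin 2) ℝ := !![0, 1; -1, 0]

/-- `Z = diag(1,-1)`. -/
def Z2 : Matrix (Fin 2) (Fin 2) ℝ := !![1, 0; 0, -1]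

/-- The 4×4 symplectic form `Ω = diag(J, J)`. -/
def Ω4 : Matrix (Fin 2 ⊕ Fin 2) (Fin 2 ⊕ Fin 2) ℝ := fromBlocks J2 0 0 J2

/-- `V` is a physical covariance matrix of a two-mode Gaussian state: `V + iΩ` is
positive semidefinite. -/
def IsPhysCM (V : Matrix (Fin 2 ⊕ Fin 2) (Fin 2 ⊕ Fin 2) ℝ) : Prop :=
  (V.map Complex.ofReal + Complex.I • Ω4.map Complex.ofReal).PosSemidef

/-- Noise matrix `N(V) = Z A Z + Z C + Cᵀ Z + B` of a two-mode covariance matrix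
`V = [[A, C], [Cᵀ, B]]`. -/
def noiseN (V : Matrix (Fin 2 ⊕ Fin 2) (Fin 2 ⊕ Fin 2) ℝ) : Matrix (Fin 2) (Fin 2) ℝ :=
  Z2 * V.toBlocks₁₁ * Z2 + Z2 * V.toBlocks₁₂ + (V.toBlocks₁₂)ᵀ * Z2 + V.toBlocks₂₂

/-- Coherent-state teleportation fidelity `F(V) = 2 / √(det (2 I₂ + N(V)))`. -/
def fid (V : Matrix (Fin 2 ⊕ Fin 2) (Fin 2 ⊕ Fin 2) ℝ) : ℝ :=
  2 / Real.sqrt (((2 : ℝ) • (1 : Matrix (Fin 2) (Fin 2) ℝ) + noiseN V).det)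

/-- `Σ(V) = det A + det B - 2 det C`. -/
def SigmaPT (V : Matrix (Fin 2 ⊕ Fin 2) (Fin 2 ⊕ Fin 2) ℝ) : ℝ :=
  (V.toBlocks₁₁).det + (V.toBlocks₂₂).det - 2 * (V.toBlocks₁₂).det

/-- The lowest partially-transposed symplectic eigenvalue
`ν(V) = √((Σ − √(Σ² − 4 det V))/2)`. -/
def nuPT (V : Matrix (Fin 2 ⊕ Fin 2) (Fin 2 ⊕ Fin 2) ℝ) : ℝ :=
  Real.sqrt ((SigmaPT V - Real.sqrt ((SigmaPT V) ^ 2 - 4 * V.det)) / 2)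

/-- The covariance matrix shared by Alice and Bob after entanglement swapping
through a channel adding noise `2n·I₂`, using a two-mode squeezed state with
squeezing parameter `r`. -/
def Wswap (n r : ℝ) : Matrix (Fin 2 ⊕ Fin 2) (Fin 2 ⊕ Fin 2) ℝ :=
  fromBlocks (Real.cosh r • (1 : Matrix (Fin 2) (Fin 2) ℝ)) (-(Real.sinh r) • Z2)
    (-(Real.sinh r) • Z2) ((2 * n + Real.cosh r) • (1 : Matrix (Fin 2) (Fin 2) ℝ))

/-- `Z2` squares to the identity. -/
lemma Z2_mul_Z2 : Z2 * Z2 = 1 := by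
  ext i j
  fin_cases i <;> fin_cases j <;>
    simp [Z2, Matrix.mul_apply, Fin.sum_univ_two, Matrix.one_apply]

/-- Determinant of the block matrix appearing in `Wswap`. -/
lemma det_blocks (a b e : ℝ) (ha : a ≠ 0) :
    (fromBlocks (a • (1 : Matrix (Fin 2) (Fin 2) ℝ)) (e • Z2) (e • Z2)
      (b • (1 : Matrix (Fin 2) (Fin 2) ℝ))).det = (a * b - e ^ 2) ^ 2 := by
  have hA : Invertible (a • (1 : Matrix (Fin 2) (Fin 2) ℝ)) :=
    Matrix.invertibleOfIsUnitDet _ (by simp [ha])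
  rw [det_fromBlocks₁₁]
  have hinv : ⅟ (a • (1 : Matrix (Fin 2) (Fin 2) ℝ)) = a⁻¹ • 1 := by
    apply invOf_eq_right_inv
    rw [smul_mul_smul_comm]
    simp [mul_inv_cancel₀ ha]
  rw [hinv]
  have hZ : (e • Z2) * (a⁻¹ • (1 : Matrix (Fin 2) (Fin 2) ℝ)) * (e • Z2)
      = (e ^ 2 * a⁻¹) • 1 := by
    rw [smul_mul_smul_comm, smul_mul_smul_comm, Matrix.mul_one, Z2_mul_Z2]
    module
  rw [hZ, ← sub_smul]
  simp [Matrix.det_smul, Matrix.det_one]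
  field_simp

lemma det_Z2 : Z2.det = -1 := by
  simp [Z2, Matrix.det_fin_two_of]

/-- Closed form of the lowest PT symplectic eigenvalue of `Wswap n r`. -/
lemma nuPT_Wswap (n r : ℝ) (hn : 0 < n) :
    nuPT (Wswap n r) = Real.cosh r + n - Real.sqrt (Real.cosh r ^ 2 + n ^ 2 - 1) := by
  set c := Real.cosh r with hc
  have hc1 : 1 ≤ c := Real.one_le_cosh r
  have hc0 : c ≠ 0 := by linarith
  set s := Real.sinh r with hs
  have hs2 : s ^ 2 = c ^ 2 - 1 := by
    have := Real.cosh_sq_sub_sinh_sq r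
    rw [← hc, ← hs] at this; nlinarith [this]
  -- determinant
  have hdet : (Wswap n r).det = (1 + 2 * n * c) ^ 2 := by
    rw [Wswap, det_blocks _ _ _ hc0]
    rw [← hc, ← hs]
    linear_combination (s ^ 2 - c ^ 2 + 1 - 2 * (2 * n * c + 1)) * hs2
  -- Sigma
  have hSig : SigmaPT (Wswap n r) = 4 * c ^ 2 + 4 * n * c + 4 * n ^ 2 - 2 := by
    rw [SigmaPT, Wswap]
    rw [Matrix.toBlocks_fromBlocks₁₁, Matrix.toBlocks_fromBlocks₂₂,
      Matrix.toBlocks_fromBlocks₁₂]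
    rw [Matrix.det_smul, Matrix.det_smul, Matrix.det_smul, det_Z2, Matrix.det_one]
    rw [← hc, ← hs]
    simp only [Fintype.card_fin]
    linear_combination 2 * hs2
  set u := Real.sqrt (c ^ 2 + n ^ 2 - 1) with hu
  have harg : (0:ℝ) ≤ c ^ 2 + n ^ 2 - 1 := by nlinarith
  have hu2 : u ^ 2 = c ^ 2 + n ^ 2 - 1 := Real.sq_sqrt harg
  have hu0 : 0 ≤ u := Real.sqrt_nonneg _
  have hcu : u ≤ c + n := by
    nlinarith [hu2, hu0]
  rw [nuPT, hSig, hdet]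
  have h1 : (4 * c ^ 2 + 4 * n * c + 4 * n ^ 2 - 2) ^ 2 - 4 * (1 + 2 * n * c) ^ 2
      = (4 * (c + n)) ^ 2 * (c ^ 2 + n ^ 2 - 1) := by ring
  rw [h1, Real.sqrt_mul (sq_nonneg _), Real.sqrt_sq (by linarith : (0:ℝ) ≤ 4 * (c + n))]
  have h2 : (4 * c ^ 2 + 4 * n * c + 4 * n ^ 2 - 2 - 4 * (c + n) * u) / 2
      = (c + n - u) ^ 2 := by nlinarith [hu2]
  rw [h2, Real.sqrt_sq (by linarith)]

/-- for fixed `n > 0`, the lowest PT symplectic eigenvalue of the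
post-swapping covariance matrix `W(r)` tends to `n` as `r → ∞`. -/
theorem swap_nu_tendsto (n : ℝ) (hn : 0 < n) :
    Filter.Tendsto (fun r : ℝ => nuPT (Wswap n r)) Filter.atTop (nhds n) := by
  have hfun : ∀ r : ℝ, nuPT (Wswap n r)
      = Real.cosh r + n - Real.sqrt (Real.cosh r ^ 2 + n ^ 2 - 1) :=
    fun r => nuPT_Wswap n r hn
  simp only [hfun]
  have key : Filter.Tendsto (fun c : ℝ => c + n - Real.sqrt (c ^ 2 + n ^ 2 - 1))
      Filter.atTop (nhds n) := by
    have hdenom : Filter.Tendsto (fun c : ℝ => c + Real.sqrt (c ^ 2 + n ^ 2 - 1))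
        Filter.atTop Filter.atTop :=
      Filter.tendsto_atTop_mono (fun c => by
        have := Real.sqrt_nonneg (c ^ 2 + n ^ 2 - 1); dsimp; linarith)
        Filter.tendsto_id
    have h0 : Filter.Tendsto
        (fun c : ℝ => n + (1 - n ^ 2) / (c + Real.sqrt (c ^ 2 + n ^ 2 - 1)))
        Filter.atTop (nhds (n + 0)) :=
      Filter.Tendsto.const_add _ (Filter.Tendsto.div_atTop tendsto_const_nhds hdenom)
    rw [add_zero] at h0
    refine Filter.Tendsto.congr' ?_ h0
    filter_upwards [Filter.eventually_ge_atTop (1:ℝ)] with c hc1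
    have harg : (0:ℝ) ≤ c ^ 2 + n ^ 2 - 1 := by nlinarith
    set u := Real.sqrt (c ^ 2 + n ^ 2 - 1) with hu
    have hu2 : u ^ 2 = c ^ 2 + n ^ 2 - 1 := Real.sq_sqrt harg
    have hu0 : 0 ≤ u := Real.sqrt_nonneg _
    have hpos : 0 < c + u := by linarith
    field_simp
    nlinarith [hu2]
  have hcosh : Filter.Tendsto Real.cosh Filter.atTop Filter.atTop := by
    apply Filter.tendsto_atTop_mono (f := fun x => Real.exp x / 2)
    · intro x
      have h1 : 0 < Real.exp (-x) := Real.exp_pos _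
      rw [Real.cosh_eq]
      linarith
    · exact Real.tendsto_exp_atTop.atTop_div_const two_pos
  exact key.comp hcosh
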